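/- Let D = D(Γ, (g_i), (χ_i), (a_{ij})) be a datum of finite Cartan type and λ a family of linking parameters for D. Assume the Cartan matrix is simply laced, i.e. a_{ij} ∈ {0, −1} for all i ≠ j, and that for every 1 ≤ i ≤ θ the multiplicative order of q_{ii} is finite and odd. Then the linking graph of (D, λ) is bipartite. -/
import Mathlib


open scoped BigOperators

/-- `a` is a Cartan matrix of finite type: diagonal entries `2`, off-diagonal entries `≤ 0`,
`a i j = 0 ↔ a j i = 0`, and there are positive integers `d i` symmetrizing `a` such that the
symmetrized matrix is positive definite. -/
def IsFiniteCartanMatrix {θ : ℕ} (a : Fin θ → Fin θ → ℤ) : Prop :=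
  (∀ i, a i i = 2) ∧
  (∀ i j, i ≠ j → a i j ≤ 0) ∧
  (∀ i j, (a i j = 0 ↔ a j i = 0)) ∧
  ∃ d : Fin θ → ℤ, (∀ i, 0 < d i) ∧ (∀ i j, d i * a i j = d j * a j i) ∧
    (Matrix.of fun i j => ((d i * a i j : ℤ) : ℝ)).PosDef

/-- The Dynkin graph of the Cartan matrix `a`: an edge between `i ≠ j` iff `a i j ≠ 0`. -/
def dynkinGraph {θ : ℕ} (a : Fin θ → Fin θ → ℤ) : SimpleGraph (Fin θ) :=
  SimpleGraph.fromRel fun i j => a i j ≠ 0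

/-- `D(Γ, (g i), (χ i), (a i j))` is a datum of finite Cartan type: with `q i j = χ j (g i)`,
one has `q i j * q j i = (q i i) ^ (a i j)` and `q i i ≠ 1`. -/
def IsCartanDatum {k : Type*} [Field k] {Γ : Type*} [CommGroup Γ] {θ : ℕ}
    (g : Fin θ → Γ) (χ : Fin θ → Γ →* kˣ) (a : Fin θ → Fin θ → ℤ) : Prop :=
  IsFiniteCartanMatrix a ∧
  (∀ i j, χ j (g i) * χ i (g j) = χ i (g i) ^ (a i j)) ∧
  (∀ i, χ i (g i) ≠ 1)

/-- Vertices `i, j` are linkable: `i ≁ j` (they lie in different connected components of the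
Dynkin graph), `g i * g j ≠ 1`, and `χ i * χ j = ε`. -/
def Linkable {k : Type*} [Field k] {Γ : Type*} [CommGroup Γ] {θ : ℕ}
    (g : Fin θ → Γ) (χ : Fin θ → Γ →* kˣ) (a : Fin θ → Fin θ → ℤ) (i j : Fin θ) : Prop :=
  ¬ (dynkinGraph a).Reachable i j ∧ g i * g j ≠ 1 ∧ χ i * χ j = 1

/-- `lam` is a family of linking parameters for the datum: for `i ≁ j` one has
`lam j i = -q j i * lam i j`, and `lam i j = 0` whenever `g i * g j = 1` or `χ i * χ j ≠ ε`. -/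
def IsLinkingFamily {k : Type*} [Field k] {Γ : Type*} [CommGroup Γ] {θ : ℕ}
    (g : Fin θ → Γ) (χ : Fin θ → Γ →* kˣ) (a : Fin θ → Fin θ → ℤ)
    (lam : Fin θ → Fin θ → k) : Prop :=
  (∀ i j, ¬ (dynkinGraph a).Reachable i j → lam j i = -(χ i (g j) : k) * lam i j) ∧
  (∀ i j, ¬ (dynkinGraph a).Reachable i j → (g i * g j = 1 ∨ χ i * χ j ≠ 1) → lam i j = 0)

/-- Vertices `i, j` are linked: they are linkable and `lam i j ≠ 0`. -/
def Linked {k : Type*} [Field k] {Γ : Type*} [CommGroup Γ] {θ : ℕ}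
    (g : Fin θ → Γ) (χ : Fin θ → Γ →* kˣ) (a : Fin θ → Fin θ → ℤ)
    (lam : Fin θ → Fin θ → k) (i j : Fin θ) : Prop :=
  Linkable g χ a i j ∧ lam i j ≠ 0

/-- The linking graph of `(D, lam)` (whose vertices are the connected components of the Dynkin
graph, with an edge between two components iff they contain linked vertices) is bipartite,
i.e. the components can be `2`-colored so that no two linked vertices lie in equally colored
components. -/
def LinkingGraphBipartite {k : Type*} [Field k] {Γ : Type*} [CommGroup Γ] {θ : ℕ}
    (g : Fin θ → Γ) (χ : Fin θ → Γ →* kˣ) (a : Fin θ → Fin θ → ℤ)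
    (lam : Fin θ → Fin θ → k) : Prop :=
  ∃ C : (dynkinGraph a).ConnectedComponent → Bool,
    ∀ i j, Linked g χ a lam i j →
      C ((dynkinGraph a).connectedComponentMk i) ≠ C ((dynkinGraph a).connectedComponentMk j)

theorem statement4 {k : Type*} [Field k] [IsAlgClosed k] [CharZero k]
    {Γ : Type*} [CommGroup Γ] {θ : ℕ}
    (g : Fin θ → Γ) (χ : Fin θ → Γ →* kˣ) (a : Fin θ → Fin θ → ℤ)
    (lam : Fin θ → Fin θ → k)
    (hD : IsCartanDatum g χ a) (hlam : IsLinkingFamily g χ a lam)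
    (hsl : ∀ i j, i ≠ j → a i j = 0 ∨ a i j = -1)
    (hord : ∀ i, 0 < orderOf (χ i (g i)) ∧ Odd (orderOf (χ i (g i)))) :
    LinkingGraphBipartite g χ a lam := by
  classical
  obtain ⟨hC, hrel, hne1⟩ := hD
  -- q-value of a vertex
  set q : Fin θ → kˣ := fun i => χ i (g i) with hq
  -- q is constant on edges
  have hadj : ∀ v w, (dynkinGraph a).Adj v w → q v = q w := by
    intro v w hvw
    rw [dynkinGraph, SimpleGraph.fromRel_adj] at hvw
    obtain ⟨hne, hor⟩ := hvw
    have haij : a v w ≠ 0 := by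
      rcases hor with h | h
      · exact h
      · exact fun h0 => h ((hC.2.2.1 v w).mp h0)
    have haji : a w v ≠ 0 := fun h0 => haij ((hC.2.2.1 w v).mp h0)
    have h1 : a v w = -1 := (hsl v w hne).resolve_left haij
    have h2 : a w v = -1 := (hsl w v hne.symm).resolve_left haji
    have e1 := hrel v w
    have e2 := hrel w v
    rw [h1] at e1
    rw [h2] at e2
    have : (q v) ^ (-1 : ℤ) = (q w) ^ (-1 : ℤ) := by
      rw [← e1, ← e2, mul_comm]
    have := congrArg (fun x => x⁻¹) this
    simpa [zpow_neg] using this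
  have hqreach : ∀ v w, (dynkinGraph a).Reachable v w → q v = q w := by
    intro v w hvw
    obtain ⟨p⟩ := hvw
    induction p with
    | nil => rfl
    | cons h _ ih => exact (hadj _ _ h).trans ih
  -- the coloring via a well-ordering of kˣ
  let s : kˣ → Bool := fun x => decide (WellOrderingRel x x⁻¹)
  have hs : ∀ x : kˣ, x ≠ x⁻¹ → s x ≠ s x⁻¹ := by
    intro x hx h
    rcases trichotomous_of WellOrderingRel x x⁻¹ with h1 | h1 | h1
    · have h2 : s x = true := by simp [s, h1]
      rw [h2] at h
      have h3 : WellOrderingRel x⁻¹ (x⁻¹)⁻¹ := of_decide_eq_true h.symm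
      rw [inv_inv] at h3
      exact asymm h1 h3
    · exact hx h1
    · have h2 : s x = false := by
        simp only [s, decide_eq_false_iff_not]
        exact asymm h1
      rw [h2] at h
      have h3 : ¬ WellOrderingRel x⁻¹ (x⁻¹)⁻¹ := of_decide_eq_false h.symm
      rw [inv_inv] at h3
      exact h3 h1
  refine ⟨SimpleGraph.ConnectedComponent.lift (fun i => s (q i))
    (fun v w p _ => congrArg s (hqreach v w ⟨p⟩)), ?_⟩
  intro i j hlink
  obtain ⟨⟨hnr, hgg, hchi⟩, _⟩ := hlink
  simp only [SimpleGraph.ConnectedComponent.lift_mk]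
  -- a i j = 0
  have hne : i ≠ j := fun h => hnr (h ▸ SimpleGraph.Reachable.refl i)
  have ha0 : a i j = 0 := by
    by_contra h0
    exact hnr (SimpleGraph.Adj.reachable
      (by rw [dynkinGraph, SimpleGraph.fromRel_adj]; exact ⟨hne, Or.inl h0⟩))
  -- q i j * q j i = 1
  have e1 := hrel i j
  rw [ha0, zpow_zero] at e1
  -- χ j = (χ i)⁻¹ pointwise
  have hji : χ j (g i) = (q i)⁻¹ := by
    have := congrArg (fun f : Γ →* kˣ => f (g i)) hchi
    simp only [MonoidHom.mul_apply, MonoidHom.one_apply] at this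
    rw [eq_inv_iff_mul_eq_one, mul_comm]
    exact this
  have hij : χ i (g j) = (q j)⁻¹ := by
    have := congrArg (fun f : Γ →* kˣ => f (g j)) hchi
    simp only [MonoidHom.mul_apply, MonoidHom.one_apply] at this
    rw [eq_inv_iff_mul_eq_one]
    exact this
  have hqij : q j = (q i)⁻¹ := by
    rw [hji, hij] at e1
    rw [eq_inv_iff_mul_eq_one]
    have := congrArg (fun x => x * (q i * q j)) e1
    simpa [mul_comm, mul_assoc, mul_left_comm] using this.symm
  -- q i ≠ (q i)⁻¹
  have hqne : q i ≠ (q i)⁻¹ := by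
    intro h
    have h2 : q i ^ 2 = 1 := by
      rw [pow_two]
      nth_rewrite 2 [h]
      exact mul_inv_cancel _
    have hdvd : orderOf (q i) ∣ 2 := orderOf_dvd_of_pow_eq_one h2
    rcases (Nat.dvd_prime Nat.prime_two).mp hdvd with h1 | h1
    · exact hne1 i (orderOf_eq_one_iff.mp h1)
    · have := (hord i).2
      rw [h1] at this
      exact (Nat.not_odd_iff_even.mpr (by decide)) this
  intro heq
  rw [hqij] at heq
  exact hs (q i) hqne heq
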